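/- Let G be a graph and S ⊆ V(G) a cluster with Γ(S) its boundary. Suppose the set B_i := Γ(S) (of size w) is α-well-linked in G[S], let (X,Y) be a minimum 1/4-balanced cut of G[S] with respect to B_i with |X ∩ B_i| ≥ |Y ∩ B_i|, and let Z ⊆ X be the set of vertices incident on edges of E(X,Y). Then Z is 1-well-linked in G[X]. -/

import Mathlib

attribute [local instance] Classical.propDecidable

noncomputable section

variable {V : Type}

/-- The degree of a vertex `v` in the simple graph `G`. -/
def deg [Fintype V] (G : SimpleGraph V) (v : V) : ℕ :=
  (Finset.univ.filter (fun u => G.Adj v u)).card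

/-- The boundary `Γ(C)` of a cluster `C`: the vertices of `C` having a neighbor outside `C`. -/
def bdry (G : SimpleGraph V) (C : Finset V) : Finset V :=
  C.filter (fun v => ∃ u, u ∉ C ∧ G.Adj v u)

/-- The number of edges `|E(A,B)|` with one endpoint in `A` and the other in `B`
(for disjoint `A`, `B`). -/
def cutCard (G : SimpleGraph V) (A B : Finset V) : ℕ :=
  ((A ×ˢ B).filter (fun ab => G.Adj ab.1 ab.2)).card

/-- A flow in `G[C]` from `A` to `B`, in which every vertex of `A` sends exactly one
unit of flow, every vertex of `B` receives exactly one unit of flow, and the total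
flow through any edge is at most `η`. -/
def HasUnitFlowIn (G : SimpleGraph V) (C A B : Finset V) (η : ℝ) : Prop :=
  ∃ (P : Finset (Σ u v : V, G.Walk u v)) (f : (Σ u v : V, G.Walk u v) → ℝ),
    (∀ p ∈ P, 0 ≤ f p) ∧
    (∀ p ∈ P, p.1 ∈ A ∧ p.2.1 ∈ B) ∧
    (∀ p ∈ P, ∀ x ∈ p.2.2.support, x ∈ C) ∧
    (∀ a ∈ A, ∑ p ∈ P.filter (fun p => p.1 = a), f p = 1) ∧
    (∀ b ∈ B, ∑ p ∈ P.filter (fun p => p.2.1 = b), f p = 1) ∧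
    (∀ e : Sym2 V, ∑ p ∈ P.filter (fun p => e ∈ p.2.2.edges), f p ≤ η)

/-- `T` is `α`-well-linked in `G[C]`: every pair of disjoint equal-sized subsets of `T`
can be connected, one-to-one, by a flow of edge-congestion at most `1/α` inside `C`. -/
def WellLinkedIn (G : SimpleGraph V) (C T : Finset V) (α : ℝ) : Prop :=
  ∀ T' T'' : Finset V, T' ⊆ T → T'' ⊆ T → Disjoint T' T'' → T'.card = T''.card →
    HasUnitFlowIn G C T' T'' (1 / α)

/-- `T` is `(k',α)`-well-linked in `G[C]`. -/
def WellLinkedKIn (G : SimpleGraph V) (C T : Finset V) (k' : ℕ) (α : ℝ) : Prop :=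
  ∀ T' T'' : Finset V, T' ⊆ T → T'' ⊆ T → Disjoint T' T'' → T'.card = T''.card →
    T'.card ≤ k' → HasUnitFlowIn G C T' T'' (1 / α)

/-- `T` is `α`-well-linked in `G`. -/
def WellLinked [Fintype V] (G : SimpleGraph V) (T : Finset V) (α : ℝ) : Prop :=
  WellLinkedIn G Finset.univ T α

/-- There is a family of pairwise vertex-disjoint paths in `G`, one starting at each
vertex of `A`, each ending at a (necessarily distinct) vertex of `B`. -/
def NodeLinkedSets (G : SimpleGraph V) (A B : Finset V) : Prop :=
  ∃ P : Finset (Σ u v : V, G.Walk u v),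
    (∀ p ∈ P, p.2.2.IsPath ∧ p.1 ∈ A ∧ p.2.1 ∈ B) ∧
    (∀ a ∈ A, ∃ p ∈ P, p.1 = a) ∧
    (∀ p ∈ P, ∀ q ∈ P, p ≠ q → ∀ x ∈ p.2.2.support, x ∉ q.2.2.support)

/-- `T` is node-well-linked in `G`. -/
def NodeWellLinked (G : SimpleGraph V) (T : Finset V) : Prop :=
  ∀ T' T'' : Finset V, T' ⊆ T → T'' ⊆ T → Disjoint T' T'' → T'.card = T''.card →
    NodeLinkedSets G T' T''

/-- `(T₁, T₂)` are node-linked in `G`. -/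
def NodeLinked (G : SimpleGraph V) (T₁ T₂ : Finset V) : Prop :=
  ∀ T' T'' : Finset V, T' ⊆ T₁ → T'' ⊆ T₂ → T'.card = T''.card → NodeLinkedSets G T' T''

/-- `(A,B)` is a `ρ`-balanced cut of the cluster `C` with respect to the vertex set `Γ`. -/
def IsBalancedCut (Γ A B C : Finset V) (ρ : ℝ) : Prop :=
  A ∪ B = C ∧ Disjoint A B ∧
    ρ * (Γ.card : ℝ) ≤ ((A ∩ Γ).card : ℝ) ∧ ρ * (Γ.card : ℝ) ≤ ((B ∩ Γ).card : ℝ)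

open List

lemma chain_dedup {α : Type*} (r : α → α → Prop) :
    ∀ (n : ℕ) (l : List α) (a : α), l.length ≤ n → List.Chain r a l →
    ∃ l', List.Chain r a l' ∧
      (a::l').getLast? = (a::l).getLast? ∧
      (a::l').Nodup ∧ (a::l') ⊆ (a::l) := by
  intro n
  induction n with
  | zero =>
    intro l a hl _
    have : l = [] := List.length_eq_zero_iff.mp (Nat.le_zero.mp hl)
    subst this
    exact ⟨[], List.Chain.nil, rfl, by simp, by simp⟩
  | succ n ih =>
    intro l a hl hc
    by_cases ha : a ∈ l
    · obtain ⟨l₁, l₂, rfl⟩ := List.append_of_mem ha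
      have hsplit := (List.isChain_cons_split (l₁ := l₁) (l₂ := l₂) (c := a)).mp hc
      have hlen : l₂.length ≤ n := by
        have h2 : (l₁ ++ a :: l₂).length = l₁.length + l₂.length + 1 := by
          simp [List.length_append]; omega
        omega
      obtain ⟨l', hc', hlast', hnd', hsub'⟩ := ih l₂ a hlen hsplit.2
      refine ⟨l', hc', ?_, hnd', ?_⟩
      · rw [hlast']
        have : a :: (l₁ ++ a :: l₂) = (a :: l₁) ++ (a :: l₂) := by simp
        rw [this, List.getLast?_append]
        rw [List.getLast?_eq_getLast (List.cons_ne_nil a l₂)]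
        rfl
      · intro x hx
        have := hsub' hx
        simp only [List.mem_cons] at this ⊢
        rcases this with h | h
        · exact Or.inl h
        · exact Or.inr (by simp [h])
    · cases l with
      | nil => exact ⟨[], hc, rfl, by simp, by simp⟩
      | cons x l'' =>
        simp only [List.Chain, List.isChain_cons_cons] at hc
        have hlen : l''.length ≤ n := by simp at hl; omega
        obtain ⟨m, hcm, hlastm, hndm, hsubm⟩ := ih l'' x hlen hc.2
        refine ⟨x :: m, List.chain_cons.mpr ⟨hc.1, hcm⟩, ?_, ?_, ?_⟩
        · rw [List.getLast?_cons_cons, hlastm, List.getLast?_cons_cons]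
        · refine List.nodup_cons.mpr ⟨?_, hndm⟩
          intro hmem
          exact ha (hsubm hmem)
        · intro y hy
          simp only [List.mem_cons] at hy ⊢
          rcases hy with h | h
          · exact Or.inl h
          · have := hsubm (List.mem_cons.mpr h)
            simp only [List.mem_cons] at this
            exact Or.inr this

/-- From reflexive-transitive closure, get a nodup chain. -/
lemma exists_nodup_chain_of_reflTransGen {α : Type*} {r : α → α → Prop} {a b : α}
    (h : Relation.ReflTransGen r a b) :
    ∃ l : List α, List.Chain r a l ∧ (a::l).getLast? = some b ∧ (a::l).Nodup := by
  obtain ⟨l, hc, hlast⟩ := List.exists_isChain_cons_of_relationReflTransGen h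
  obtain ⟨l', hc', hlast', hnd', _⟩ := chain_dedup r l.length l a le_rfl hc
  refine ⟨l', hc', ?_, hnd'⟩
  rw [hlast', List.getLast?_eq_getLast (List.cons_ne_nil a l), hlast]

/-- The list of consecutive pairs of a list. -/
def pairList {α : Type*} (l : List α) : List (α × α) := l.dropLast.zip l.tail

lemma pairList_cons_cons {α : Type*} (a x : α) (l : List α) :
    pairList (a :: x :: l) = (a, x) :: pairList (x :: l) := by
  simp [pairList]

lemma pairList_singleton {α : Type*} (a : α) : pairList [a] = [] := by simp [pairList]

lemma chain_pairList {α : Type*} {r : α → α → Prop} :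
    ∀ (l : List α) (a : α), List.Chain r a l → ∀ p ∈ pairList (a :: l), r p.1 p.2 := by
  intro l
  induction l with
  | nil => intro a _ p hp; simp [pairList_singleton] at hp
  | cons x l'' ih =>
    intro a hc p hp
    simp only [List.Chain, List.isChain_cons_cons] at hc
    rw [pairList_cons_cons] at hp
    rcases List.mem_cons.mp hp with h | h
    · subst h; exact hc.1
    · exact ih x hc.2 p h

lemma mem_pairList_mem {α : Type*} {l : List α} {p : α × α} (hp : p ∈ pairList l) :
    p.1 ∈ l ∧ p.2 ∈ l := by
  have h1 := List.of_mem_zip hp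
  exact ⟨List.dropLast_subset l h1.1, List.tail_subset l h1.2⟩

lemma pairList_fst_mem {α : Type*} {l : List α} {p : α × α} (hp : p ∈ pairList l) :
    p.1 ∈ l.dropLast := (List.of_mem_zip hp).1

lemma pairList_snd_mem {α : Type*} {l : List α} {p : α × α} (hp : p ∈ pairList l) :
    p.2 ∈ l.tail := (List.of_mem_zip hp).2

lemma pairList_fst_unique {α : Type*} :
    ∀ (l : List α), l.Nodup → ∀ v u u', (v, u) ∈ pairList l → (v, u') ∈ pairList l → u = u' := by
  intro l
  induction l with
  | nil => intro _ v u u' h; simp [pairList] at h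
  | cons a l' ih =>
    intro hnd v u u' h h'
    cases l' with
    | nil => simp [pairList_singleton] at h
    | cons x l'' =>
      rw [pairList_cons_cons] at h h'
      rw [List.nodup_cons] at hnd
      rcases List.mem_cons.mp h with h1 | h1 <;> rcases List.mem_cons.mp h' with h2 | h2
      · simp only [Prod.mk.injEq] at h1 h2
        rw [h1.2, h2.2]
      · simp only [Prod.mk.injEq] at h1
        obtain ⟨rfl, rfl⟩ := h1
        exact absurd (List.dropLast_subset _ (pairList_fst_mem h2)) hnd.1
      · simp only [Prod.mk.injEq] at h2
        obtain ⟨rfl, rfl⟩ := h2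
        exact absurd (List.dropLast_subset _ (pairList_fst_mem h1)) hnd.1
      · exact ih hnd.2 v u u' h1 h2

lemma pairList_snd_unique {α : Type*} :
    ∀ (l : List α), l.Nodup → ∀ v u u', (u, v) ∈ pairList l → (u', v) ∈ pairList l → u = u' := by
  intro l
  induction l with
  | nil => intro _ v u u' h; simp [pairList] at h
  | cons a l' ih =>
    intro hnd v u u' h h'
    cases l' with
    | nil => simp [pairList_singleton] at h
    | cons x l'' =>
      rw [pairList_cons_cons] at h h'
      rw [List.nodup_cons] at hnd
      have hxl : x ∉ l'' := (List.nodup_cons.mp hnd.2).1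
      rcases List.mem_cons.mp h with h1 | h1 <;> rcases List.mem_cons.mp h' with h2 | h2
      · simp only [Prod.mk.injEq] at h1 h2
        rw [h1.1, h2.1]
      · simp only [Prod.mk.injEq] at h1
        obtain ⟨rfl, rfl⟩ := h1
        exact absurd (pairList_snd_mem h2) hxl
      · simp only [Prod.mk.injEq] at h2
        obtain ⟨rfl, rfl⟩ := h2
        exact absurd (pairList_snd_mem h1) hxl
      · exact ih hnd.2 v u u' h1 h2

lemma pairList_no_opp {α : Type*} :
    ∀ (l : List α), l.Nodup → ∀ u v, (u, v) ∈ pairList l → (v, u) ∉ pairList l := by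
  intro l
  induction l with
  | nil => intro _ u v h; simp [pairList] at h
  | cons a l' ih =>
    intro hnd u v h h'
    cases l' with
    | nil => simp [pairList_singleton] at h
    | cons x l'' =>
      rw [pairList_cons_cons] at h h'
      rw [List.nodup_cons] at hnd
      rcases List.mem_cons.mp h with h1 | h1 <;> rcases List.mem_cons.mp h' with h2 | h2
      · simp only [Prod.mk.injEq] at h1 h2
        obtain ⟨rfl, rfl⟩ := h1
        exact hnd.1 (by rw [h2.2]; simp)
      · simp only [Prod.mk.injEq] at h1
        obtain ⟨rfl, rfl⟩ := h1
        exact hnd.1 (List.mem_cons.mpr (Or.inr (pairList_snd_mem h2)))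
      · simp only [Prod.mk.injEq] at h2
        obtain ⟨rfl, rfl⟩ := h2
        exact hnd.1 (List.mem_cons.mpr (Or.inr (pairList_snd_mem h1)))
      · exact ih hnd.2 u v h1 h2

lemma pairList_ne {α : Type*} :
    ∀ (l : List α), l.Nodup → ∀ u, (u, u) ∉ pairList l := by
  intro l
  induction l with
  | nil => intro _ u h; simp [pairList] at h
  | cons a l' ih =>
    intro hnd u h
    cases l' with
    | nil => simp [pairList_singleton] at h
    | cons x l'' =>
      rw [pairList_cons_cons] at h
      rw [List.nodup_cons] at hnd
      rcases List.mem_cons.mp h with h1 | h1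
      · have hu : u = a := by have := congrArg Prod.fst h1; simpa using this
        have hx : u = x := by have := congrArg Prod.snd h1; simpa using this
        exact hnd.1 (by rw [← hu, hx]; simp)
      · exact ih hnd.2 u h1



lemma dropLast_length_eq {α : Type*} (l : List α) : l.dropLast.length = l.tail.length := by
  cases l <;> simp

lemma pairList_sum_fst {α : Type*} [Fintype α] {l : List α} (hnd : l.Nodup) (v : α) :
    ∑ u, (if (v, u) ∈ pairList l then (1:ℤ) else 0) = if v ∈ l.dropLast then 1 else 0 := by
  by_cases hv : v ∈ l.dropLast
  · have hmap : (pairList l).map Prod.fst = l.dropLast :=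
      List.map_fst_zip (le_of_eq (dropLast_length_eq l))
    have : v ∈ (pairList l).map Prod.fst := hmap ▸ hv
    obtain ⟨p, hp, hpv⟩ := List.mem_map.mp this
    have hpe : p = (v, p.2) := by ext <;> simp [hpv]
    rw [hpe] at hp
    have key : ∀ u, ((v, u) ∈ pairList l) ↔ u = p.2 := by
      intro u
      constructor
      · intro h; exact pairList_fst_unique l hnd v u p.2 h hp
      · rintro rfl; exact hp
    simp only [key, hv, if_true]
    simp
  · have : ∀ u, ((v, u) ∈ pairList l) = False := by
      intro u
      simp only [eq_iff_iff, iff_false]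
      intro h
      exact hv (pairList_fst_mem h)
    simp [this, hv]

lemma pairList_sum_snd {α : Type*} [Fintype α] {l : List α} (hnd : l.Nodup) (v : α) :
    ∑ u, (if (u, v) ∈ pairList l then (1:ℤ) else 0) = if v ∈ l.tail then 1 else 0 := by
  by_cases hv : v ∈ l.tail
  · have hmap : (pairList l).map Prod.snd = l.tail :=
      List.map_snd_zip (ge_of_eq (dropLast_length_eq l))
    have : v ∈ (pairList l).map Prod.snd := hmap ▸ hv
    obtain ⟨p, hp, hpv⟩ := List.mem_map.mp this
    have hpe : p = (p.1, v) := by ext <;> simp [hpv]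
    rw [hpe] at hp
    have key : ∀ u, ((u, v) ∈ pairList l) ↔ u = p.1 := by
      intro u
      constructor
      · intro h; exact pairList_snd_unique l hnd v u p.1 h hp
      · rintro rfl; exact hp
    simp only [key, hv, if_true]
    simp
  · have : ∀ u, ((u, v) ∈ pairList l) = False := by
      intro u
      simp only [eq_iff_iff, iff_false]
      intro h
      exact hv (pairList_snd_mem h)
    simp [this, hv]

lemma chain_of_pairList {α : Type*} {r : α → α → Prop} :
    ∀ (l : List α) (a : α), (∀ p ∈ pairList (a :: l), r p.1 p.2) → List.Chain r a l := by
  intro l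
  induction l with
  | nil => intro a _; exact List.Chain.nil
  | cons x l'' ih =>
    intro a h
    rw [pairList_cons_cons] at h
    exact List.chain_cons.mpr ⟨h (a, x) (by simp), ih x (fun p hp => h p (by simp [hp]))⟩

/-- A flow with excess function `e` in `G[X]` (skew-symmetric, unit capacities). -/
def IsFlowE [Fintype V] (G : SimpleGraph V) (X : Finset V) (f : V → V → ℤ) (e : V → ℤ) : Prop :=
  (∀ u v, f u v = - f v u) ∧ (∀ u v, f u v ≤ 1) ∧
  (∀ u v, 0 < f u v → G.Adj u v ∧ u ∈ X ∧ v ∈ X) ∧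
  (∀ v, ∑ u, f v u = e v)

/-- The residual relation. -/
def Rres [Fintype V] (G : SimpleGraph V) (X : Finset V) (f : V → V → ℤ) (u v : V) : Prop :=
  G.Adj u v ∧ u ∈ X ∧ v ∈ X ∧ f u v < 1

def exA (A B : Finset V) : V → ℤ := fun v => (if v ∈ A then 1 else 0) - (if v ∈ B then 1 else 0)

lemma bump_flow [Fintype V] {G : SimpleGraph V} {X : Finset V} {f : V → V → ℤ} {e : V → ℤ}
    {a x : V} (h : IsFlowE G X f e) (hR : Rres G X f a x) :
    IsFlowE G X
      (fun u v => f u v + (if u = a ∧ v = x then 1 else 0) - (if u = x ∧ v = a then 1 else 0))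
      (fun v => e v + (if v = a then 1 else 0) - (if v = x then 1 else 0)) := by
  obtain ⟨hskew, hcap, hsupp, hcons⟩ := h
  obtain ⟨hadj, haX, hxX, hflt⟩ := hR
  have hax : a ≠ x := hadj.ne
  refine ⟨?_, ?_, ?_, ?_⟩
  · intro u v
    have hs := hskew u v
    have e1 : (if v = a ∧ u = x then (1:ℤ) else 0) = (if u = x ∧ v = a then 1 else 0) :=
      if_congr and_comm rfl rfl
    have e2 : (if v = x ∧ u = a then (1:ℤ) else 0) = (if u = a ∧ v = x then 1 else 0) :=
      if_congr and_comm rfl rfl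
    simp only [e1, e2]
    linarith
  · intro u v
    show f u v + (if u = a ∧ v = x then (1:ℤ) else 0) - (if u = x ∧ v = a then 1 else 0) ≤ 1
    by_cases h1 : u = a ∧ v = x
    · rw [h1.1, h1.2]
      have h2 : ¬ (a = x ∧ x = a) := fun h => hax h.1
      rw [if_pos ⟨rfl, rfl⟩, if_neg h2]
      linarith
    · simp only [h1, if_false]
      have := hcap u v
      split_ifs <;> linarith
  · intro u v hpos
    by_cases h1 : u = a ∧ v = x
    · obtain ⟨rfl, rfl⟩ := h1
      exact ⟨hadj, haX, hxX⟩
    · by_cases h2 : u = x ∧ v = a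
      · obtain ⟨rfl, rfl⟩ := h2
        exact ⟨hadj.symm, hxX, haX⟩
      · simp only [h1, h2, if_false] at hpos
        exact hsupp u v (by linarith)
  · intro v
    have hsplit : ∑ u, (f v u + (if v = a ∧ u = x then (1:ℤ) else 0)
        - (if v = x ∧ u = a then 1 else 0))
        = (∑ u, f v u) + (∑ u, (if v = a ∧ u = x then (1:ℤ) else 0))
          - ∑ u, (if v = x ∧ u = a then (1:ℤ) else 0) := by
      rw [Finset.sum_sub_distrib, Finset.sum_add_distrib]
    have s1 : (∑ u, (if v = a ∧ u = x then (1:ℤ) else 0)) = if v = a then 1 else 0 := by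
      by_cases hv : v = a <;> simp [hv]
    have s2 : (∑ u, (if v = x ∧ u = a then (1:ℤ) else 0)) = if v = x then 1 else 0 := by
      by_cases hv : v = x <;> simp [hv]
    rw [hsplit, s1, s2, hcons v]


lemma aug_path [Fintype V] (G : SimpleGraph V) (X : Finset V) :
    ∀ (l : List V) (a : V) (f : V → V → ℤ) (e : V → ℤ), IsFlowE G X f e →
      List.Chain (Rres G X f) a l → (a::l).Nodup → ∀ b, (a::l).getLast? = some b →
      ∃ f', IsFlowE G X f'
        (fun v => e v + (if v = a then 1 else 0) - (if v = b then 1 else 0)) := by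
  intro l
  induction l with
  | nil =>
    intro a f e hf _ _ b hb
    simp only [List.getLast?_singleton, Option.some.injEq] at hb
    refine ⟨f, ?_⟩
    rw [← hb]
    have heq : (fun v => e v + (if v = a then (1:ℤ) else 0) - (if v = a then 1 else 0)) = e := by
      funext v; ring
    rw [heq]; exact hf
  | cons x l' ih =>
    intro a f e hf hc hnd b hb
    simp only [List.Chain, List.isChain_cons_cons] at hc
    have hf₁ := bump_flow hf hc.1
    have hna : a ∉ x :: l' := (List.nodup_cons.mp hnd).1
    have hc₁ : List.Chain (Rres G X (fun u v => f u v + (if u = a ∧ v = x then 1 else 0)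
        - (if u = x ∧ v = a then 1 else 0))) x l' := by
      apply chain_of_pairList
      intro p hp
      have hr := chain_pairList l' x hc.2 p hp
      have hmem := mem_pairList_mem hp
      have hp1 : ¬ (p.1 = a ∧ p.2 = x) := fun h => hna (h.1 ▸ hmem.1)
      have hp2 : ¬ (p.1 = x ∧ p.2 = a) := fun h => hna (h.2 ▸ hmem.2)
      refine ⟨hr.1, hr.2.1, hr.2.2.1, ?_⟩
      simp only [hp1, hp2, if_false]
      have := hr.2.2.2
      linarith
    have hnd' : (x::l').Nodup := (List.nodup_cons.mp hnd).2
    have hb' : (x::l').getLast? = some b := by rw [← List.getLast?_cons_cons]; exact hb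
    obtain ⟨f', hf'⟩ := ih x _ _ hf₁ hc₁ hnd' b hb'
    refine ⟨f', ?_⟩
    have heq : (fun v => (e v + (if v = a then (1:ℤ) else 0) - (if v = x then 1 else 0))
        + (if v = x then 1 else 0) - (if v = b then 1 else 0))
        = fun v => e v + (if v = a then (1:ℤ) else 0) - (if v = b then 1 else 0) := by
      funext v; ring
    rw [heq] at hf'
    exact hf'

lemma cutCard_eq_sum (G : SimpleGraph V) (A B : Finset V) :
    (cutCard G A B : ℤ) = ∑ v ∈ A, ∑ u ∈ B, (if G.Adj v u then (1:ℤ) else 0) := by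
  unfold cutCard
  rw [Finset.card_filter]
  push_cast
  rw [Finset.sum_product]

lemma ff_step [Fintype V] {G : SimpleGraph V} {X Z T1 T2 : Finset V}
    (hZX : Z ⊆ X) (hT1 : T1 ⊆ Z) (hT2 : T2 ⊆ Z) (hdisj : Disjoint T1 T2)
    (hTcard : T1.card = T2.card)
    (CC : ∀ J ⊆ X, min ((Z ∩ J).card) ((Z ∩ (X \ J)).card) ≤ cutCard G J (X \ J))
    {A B : Finset V} {f : V → V → ℤ}
    (hA : A ⊆ T1) (hB : B ⊆ T2) (hABcard : A.card = B.card)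
    (hf : IsFlowE G X f (exA A B)) (hAne : A ≠ T1) :
    ∃ (A' B' : Finset V) (f' : V → V → ℤ), A' ⊆ T1 ∧ B' ⊆ T2 ∧ A'.card = B'.card ∧
      A.card < A'.card ∧ IsFlowE G X f' (exA A' B') := by
  have hss : A ⊂ T1 := HasSubset.Subset.ssubset_of_ne hA hAne
  obtain ⟨a, haT1, haA⟩ := Finset.exists_of_ssubset hss
  have haZ : a ∈ Z := hT1 haT1
  have haX : a ∈ X := hZX haZ
  have hcardlt : A.card < T1.card := Finset.card_lt_card hss
  have hBne : B ≠ T2 := fun h => by rw [h] at hABcard; omega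
  obtain ⟨b₀, hb₀T2, hb₀B⟩ := Finset.exists_of_ssubset (HasSubset.Subset.ssubset_of_ne hB hBne)
  by_cases hreach : ∃ b ∈ T2, b ∉ B ∧ Relation.ReflTransGen (Rres G X f) a b
  · obtain ⟨b, hbT2, hbB, hr⟩ := hreach
    obtain ⟨l, hcl, hlast, hnd⟩ := exists_nodup_chain_of_reflTransGen hr
    obtain ⟨f', hf'⟩ := aug_path G X l a f _ hf hcl hnd b hlast
    have hab : a ≠ b := fun h => (Finset.disjoint_left.mp hdisj haT1) (h ▸ hbT2)
    have haB : a ∉ B := fun h => (Finset.disjoint_left.mp hdisj haT1) (hB h)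
    have hbA : b ∉ A := fun h => (Finset.disjoint_left.mp hdisj (hA h)) hbT2
    have key : (fun v => exA A B v + (if v = a then (1:ℤ) else 0) - (if v = b then 1 else 0))
        = exA (insert a A) (insert b B) := by
      funext v
      simp only [exA, Finset.mem_insert]
      by_cases h1 : v = a
      · subst h1; simp [haA, haB, hab]
      · by_cases h2 : v = b
        · subst h2; simp [hbA, hbB, h1]
        · simp [h1, h2]
    rw [key] at hf'
    exact ⟨insert a A, insert b B, f', Finset.insert_subset haT1 hA,
      Finset.insert_subset hbT2 hB,
      by rw [Finset.card_insert_of_notMem haA, Finset.card_insert_of_notMem hbB, hABcard],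
      by rw [Finset.card_insert_of_notMem haA]; omega, hf'⟩
  · exfalso
    push_neg at hreach
    obtain ⟨hskew, hcap, hsupp, hcons⟩ := hf
    set J := X.filter (fun v => Relation.ReflTransGen (Rres G X f) a v) with hJdef
    have hJX : J ⊆ X := Finset.filter_subset _ _
    have haJ : a ∈ J := Finset.mem_filter.mpr ⟨haX, Relation.ReflTransGen.refl⟩
    have hsat : ∀ v ∈ J, ∀ u, u ∉ J → f v u = if u ∈ X ∧ G.Adj v u then 1 else 0 := by
      intro v hv u hu
      obtain ⟨hvX, hvreach⟩ := Finset.mem_filter.mp hv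
      by_cases hcase : u ∈ X ∧ G.Adj v u
      · rw [if_pos hcase]
        by_contra hne
        have hlt : f v u < 1 := lt_of_le_of_ne (hcap v u) hne
        exact hu (Finset.mem_filter.mpr ⟨hcase.1,
          hvreach.tail ⟨hcase.2, hvX, hcase.1, hlt⟩⟩)
      · rw [if_neg hcase]
        have h1 : ¬ 0 < f v u := fun h => hcase ⟨(hsupp v u h).2.2, (hsupp v u h).1⟩
        have h2 : ¬ 0 < f u v := fun h => hcase ⟨(hsupp u v h).2.1, (hsupp u v h).1.symm⟩
        have h3 := hskew v u
        omega
    have hcut : (cutCard G J (X \ J) : ℤ) = ((A ∩ J).card : ℤ) - ((B ∩ J).card : ℤ) := by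
      have e1 : ∑ v ∈ J, (∑ u, f v u) = ∑ v ∈ J, exA A B v :=
        Finset.sum_congr rfl fun v _ => hcons v
      have e2 : ∀ v, (∑ u, f v u) = (∑ u ∈ J, f v u) + ∑ u ∈ Finset.univ \ J, f v u := by
        intro v
        rw [add_comm]
        exact (Finset.sum_sdiff (Finset.subset_univ J)).symm
      have e3 : ∑ v ∈ J, ∑ u ∈ J, f v u = 0 := by
        have h1 : ∑ v ∈ J, ∑ u ∈ J, f v u = ∑ u ∈ J, ∑ v ∈ J, f v u := Finset.sum_comm
        have h2 : ∑ u ∈ J, ∑ v ∈ J, f v u = -∑ u ∈ J, ∑ v ∈ J, f u v := by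
          rw [← Finset.sum_neg_distrib]
          refine Finset.sum_congr rfl fun u _ => ?_
          rw [← Finset.sum_neg_distrib]
          exact Finset.sum_congr rfl fun v _ => hskew v u
        have h3 : ∑ u ∈ J, ∑ v ∈ J, f u v = ∑ v ∈ J, ∑ u ∈ J, f v u := rfl
        rw [h3] at h2
        omega
      have e4 : ∑ v ∈ J, ∑ u ∈ Finset.univ \ J, f v u = (cutCard G J (X \ J) : ℤ) := by
        rw [cutCard_eq_sum]
        refine Finset.sum_congr rfl fun v hv => ?_
        have e5 : ∑ u ∈ Finset.univ \ J, f v u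
            = ∑ u ∈ Finset.univ \ J, (if u ∈ X ∧ G.Adj v u then (1:ℤ) else 0) :=
          Finset.sum_congr rfl fun u hu => hsat v hv u (Finset.mem_sdiff.mp hu).2
        rw [e5]
        rw [← Finset.sum_subset (Finset.sdiff_subset_sdiff (Finset.subset_univ X) le_rfl)
          (fun u hu hu' => by
            rw [if_neg]
            rintro ⟨huX, -⟩
            exact hu' (Finset.mem_sdiff.mpr ⟨huX, (Finset.mem_sdiff.mp hu).2⟩))]
        refine Finset.sum_congr rfl fun u hu => ?_
        have huX : u ∈ X := (Finset.mem_sdiff.mp hu).1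
        simp [huX]
      have e6 : ∑ v ∈ J, exA A B v = ((A ∩ J).card : ℤ) - ((B ∩ J).card : ℤ) := by
        unfold exA
        rw [Finset.sum_sub_distrib]
        rw [Finset.sum_boole, Finset.sum_boole]
        rw [Finset.filter_mem_eq_inter, Finset.filter_mem_eq_inter]
        rw [Finset.inter_comm J A, Finset.inter_comm J B]
      calc (cutCard G J (X \ J) : ℤ) = ∑ v ∈ J, ∑ u ∈ Finset.univ \ J, f v u := e4.symm
        _ = ∑ v ∈ J, ((∑ u ∈ J, f v u) + ∑ u ∈ Finset.univ \ J, f v u)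
            - ∑ v ∈ J, ∑ u ∈ J, f v u := by
          rw [Finset.sum_add_distrib]; ring
        _ = ∑ v ∈ J, (∑ u, f v u) - 0 := by
          rw [e3]
          congr 1
          exact Finset.sum_congr rfl fun v _ => (e2 v).symm
        _ = ((A ∩ J).card : ℤ) - ((B ∩ J).card : ℤ) := by rw [e1, e6]; ring
    have h1 : (A ∩ J).card + 1 ≤ (Z ∩ J).card := by
      have hsub : insert a (A ∩ J) ⊆ Z ∩ J := by
        refine Finset.insert_subset (Finset.mem_inter.mpr ⟨haZ, haJ⟩) ?_
        exact Finset.inter_subset_inter (hA.trans hT1) le_rfl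
      have := Finset.card_le_card hsub
      rwa [Finset.card_insert_of_notMem (fun h => haA (Finset.mem_inter.mp h).1)] at this
    have hbJ : b₀ ∉ J := fun h => hreach b₀ hb₀T2 hb₀B (Finset.mem_filter.mp h).2
    have hbX : b₀ ∈ X := hZX (hT2 hb₀T2)
    have h2 : (B ∩ J).card + (B \ J).card = B.card := Finset.card_inter_add_card_sdiff B J
    have h3 : (B \ J).card + 1 ≤ (Z ∩ (X \ J)).card := by
      have hsub : insert b₀ (B \ J) ⊆ Z ∩ (X \ J) := by
        refine Finset.insert_subset
          (Finset.mem_inter.mpr ⟨hT2 hb₀T2, Finset.mem_sdiff.mpr ⟨hbX, hbJ⟩⟩) ?_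
        intro v hv
        obtain ⟨hvB, hvJ⟩ := Finset.mem_sdiff.mp hv
        exact Finset.mem_inter.mpr ⟨hT2 (hB hvB),
          Finset.mem_sdiff.mpr ⟨hZX (hT2 (hB hvB)), hvJ⟩⟩
      have := Finset.card_le_card hsub
      rwa [Finset.card_insert_of_notMem (fun h => hb₀B (Finset.mem_sdiff.mp h).1)] at this
    have h4 : (A ∩ J).card ≤ A.card := Finset.card_le_card (Finset.inter_subset_left)
    have h5 := CC J hJX
    omega

lemma maxflow [Fintype V] {G : SimpleGraph V} {X Z T1 T2 : Finset V}
    (hZX : Z ⊆ X) (hT1 : T1 ⊆ Z) (hT2 : T2 ⊆ Z) (hdisj : Disjoint T1 T2)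
    (hTcard : T1.card = T2.card)
    (CC : ∀ J ⊆ X, min ((Z ∩ J).card) ((Z ∩ (X \ J)).card) ≤ cutCard G J (X \ J)) :
    ∃ f, IsFlowE G X f (exA T1 T2) := by
  suffices h : ∀ (n : ℕ) (A B : Finset V) (f : V → V → ℤ), A ⊆ T1 → B ⊆ T2 →
      A.card = B.card → IsFlowE G X f (exA A B) → T1.card - A.card ≤ n →
      ∃ f', IsFlowE G X f' (exA T1 T2) by
    refine h T1.card ∅ ∅ (fun _ _ => 0) (Finset.empty_subset _) (Finset.empty_subset _) rfl
      ⟨fun u v => by ring, fun u v => by norm_num, fun u v h => absurd h (by norm_num),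
       fun v => by simp [exA]⟩ (by omega)
  intro n
  induction n with
  | zero =>
    intro A B f hA hB hcard hf hn
    have hAeq : A = T1 := Finset.eq_of_subset_of_card_le hA (by omega)
    have hBeq : B = T2 := Finset.eq_of_subset_of_card_le hB (by omega)
    exact ⟨f, hAeq ▸ hBeq ▸ hf⟩
  | succ n ih =>
    intro A B f hA hB hcard hf hn
    by_cases hAeq : A = T1
    · have hBeq : B = T2 := Finset.eq_of_subset_of_card_le hB
        (by rw [← hTcard, ← hAeq]; omega)
      exact ⟨f, hAeq ▸ hBeq ▸ hf⟩
    · obtain ⟨A', B', f', hA', hB', hcard', hlt', hf'⟩ :=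
        ff_step hZX hT1 hT2 hdisj hTcard CC hA hB hcard hf hAeq
      exact ih A' B' f' hA' hB' hcard' hf' (by omega)

lemma walk_of_chain (G : SimpleGraph V) (r : V → V → Prop) (hr : ∀ u v, r u v → G.Adj u v) :
    ∀ (l : List V) (a b : V), List.Chain r a l → (a::l).getLast? = some b →
    ∃ w : G.Walk a b, w.support = a :: l ∧
      ∀ e ∈ w.edges, ∃ q ∈ pairList (a::l), e = Sym2.mk q.1 q.2 := by
  intro l
  induction l with
  | nil =>
    intro a b _ hb
    simp only [List.getLast?_singleton, Option.some.injEq] at hb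
    subst hb
    exact ⟨SimpleGraph.Walk.nil, by simp, by simp⟩
  | cons x l'' ih =>
    intro a b hc hb
    simp only [List.Chain, List.isChain_cons_cons] at hc
    rw [List.getLast?_cons_cons] at hb
    obtain ⟨w', hw's, hw'e⟩ := ih x b hc.2 hb
    refine ⟨SimpleGraph.Walk.cons (hr a x hc.1) w', ?_, ?_⟩
    · rw [SimpleGraph.Walk.support_cons, hw's]
    · intro e he
      rw [SimpleGraph.Walk.edges_cons, List.mem_cons] at he
      rcases he with he | he
      · exact ⟨(a, x), by rw [pairList_cons_cons]; simp, he⟩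
      · obtain ⟨q, hq, hqe⟩ := hw'e e he
        exact ⟨q, by rw [pairList_cons_cons]; simp [hq], hqe⟩

/-- An ℕ-valued flow. -/
def IsNFlow [Fintype V] (G : SimpleGraph V) (X : Finset V) (g : V → V → ℕ)
    (A B : Finset V) : Prop :=
  (∀ u v, g u v ≤ 1) ∧
  (∀ u v, 1 ≤ g u v → G.Adj u v ∧ u ∈ X ∧ v ∈ X ∧ g v u = 0) ∧
  (∀ v, ((∑ u, (g v u : ℤ)) - ∑ u, (g u v : ℤ)) = exA A B v)

lemma flow_to_nflow [Fintype V] {G : SimpleGraph V} {X A B : Finset V} {f : V → V → ℤ}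
    (hf : IsFlowE G X f (exA A B)) :
    IsNFlow G X (fun u v => (f u v).toNat) A B := by
  obtain ⟨hskew, hcap, hsupp, hcons⟩ := hf
  refine ⟨?_, ?_, ?_⟩
  · intro u v
    show (f u v).toNat ≤ 1
    have := hcap u v
    omega
  · intro u v h
    have h' : 1 ≤ (f u v).toNat := h
    have hpos : 0 < f u v := by omega
    obtain ⟨ha, hu, hv⟩ := hsupp u v hpos
    have hs := hskew v u
    refine ⟨ha, hu, hv, show (f v u).toNat = 0 by omega⟩
  · intro v
    have : ∀ u, ((f v u).toNat : ℤ) - ((f u v).toNat : ℤ) = f v u := by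
      intro u
      have := hskew v u
      omega
    calc (∑ u, ((f v u).toNat : ℤ)) - ∑ u, ((f u v).toNat : ℤ)
        = ∑ u, (((f v u).toNat : ℤ) - ((f u v).toNat : ℤ)) := (Finset.sum_sub_distrib _ _).symm
      _ = ∑ u, f v u := Finset.sum_congr rfl fun u _ => this u
      _ = exA A B v := hcons v

lemma decomp [Fintype V] {G : SimpleGraph V} {X T1 T2 : Finset V} (hdisjT : Disjoint T1 T2) :
    ∀ (n : ℕ) (A B : Finset V) (g : V → V → ℕ), A.card ≤ n → IsNFlow G X g A B →
      A ⊆ T1 → B ⊆ T2 → A.card = B.card →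
      ∃ P : Finset (Σ u v : V, G.Walk u v),
        (∀ p ∈ P, p.1 ∈ A ∧ p.2.1 ∈ B) ∧
        (∀ p ∈ P, ∀ x ∈ p.2.2.support, x ∈ X) ∧
        (∀ a ∈ A, (P.filter (fun p => p.1 = a)).card = 1) ∧
        (∀ b ∈ B, (P.filter (fun p => p.2.1 = b)).card = 1) ∧
        (∀ e : Sym2 V, (P.filter (fun p => e ∈ p.2.2.edges)).card ≤ 1) ∧
        (∀ p ∈ P, ∀ u v, s(u, v) ∈ p.2.2.edges → 1 ≤ g u v ∨ 1 ≤ g v u) := by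
  intro n
  induction n with
  | zero =>
    intro A B g hn _ _ _ hcard
    have hA : A = ∅ := Finset.card_eq_zero.mp (by omega)
    have hB : B = ∅ := Finset.card_eq_zero.mp (by omega)
    subst hA; subst hB
    exact ⟨∅, by simp, by simp, by simp, by simp, by simp, by simp⟩
  | succ n ih =>
    intro A B g hn hnf hAT hBT hcard
    rcases Finset.eq_empty_or_nonempty A with hAe | ⟨a, ha⟩
    · have hB : B = ∅ := Finset.card_eq_zero.mp (by rw [← hcard, hAe]; simp)
      subst hAe; subst hB
      exact ⟨∅, by simp, by simp, by simp, by simp, by simp, by simp⟩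
    · obtain ⟨hcap, hsupp, hcons⟩ := hnf
      set r : V → V → Prop := fun u v => 1 ≤ g u v with hrdef
      have hsink : ∃ b ∈ B, Relation.ReflTransGen r a b := by
        by_contra hno
        push_neg at hno
        set J := Finset.univ.filter (fun v => Relation.ReflTransGen r a v) with hJdef
        have haJ : a ∈ J := Finset.mem_filter.mpr ⟨Finset.mem_univ a, .refl⟩
        have hcross : ∀ v ∈ J, ∀ u, u ∉ J → g v u = 0 := by
          intro v hv u hu
          by_contra hne
          exact hu (Finset.mem_filter.mpr ⟨Finset.mem_univ u,
            (Finset.mem_filter.mp hv).2.tail (show 1 ≤ g v u by omega)⟩)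
        have hBJ : (B ∩ J).card = 0 := by
          rw [Finset.card_eq_zero, Finset.eq_empty_iff_forall_notMem]
          intro b hb
          exact hno b (Finset.mem_inter.mp hb).1
            (Finset.mem_filter.mp (Finset.mem_inter.mp hb).2).2
        have e1 : ∑ v ∈ J, ((∑ u, (g v u : ℤ)) - ∑ u, (g u v : ℤ))
            = ((A ∩ J).card : ℤ) - ((B ∩ J).card : ℤ) := by
          rw [Finset.sum_congr rfl (fun v _ => hcons v)]
          unfold exA
          rw [Finset.sum_sub_distrib, Finset.sum_boole, Finset.sum_boole,
            Finset.filter_mem_eq_inter, Finset.filter_mem_eq_inter,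
            Finset.inter_comm J A, Finset.inter_comm J B]
        have t1 : ∑ v ∈ J, ∑ u, (g v u : ℤ)
            = (∑ v ∈ J, ∑ u ∈ Finset.univ \ J, (g v u : ℤ))
              + ∑ v ∈ J, ∑ u ∈ J, (g v u : ℤ) := by
          rw [← Finset.sum_add_distrib]
          exact Finset.sum_congr rfl fun v _ => (Finset.sum_sdiff (Finset.subset_univ J)).symm
        have t2 : ∑ v ∈ J, ∑ u, (g u v : ℤ)
            = (∑ v ∈ J, ∑ u ∈ Finset.univ \ J, (g u v : ℤ))
              + ∑ v ∈ J, ∑ u ∈ J, (g u v : ℤ) := by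
          rw [← Finset.sum_add_distrib]
          exact Finset.sum_congr rfl fun v _ => (Finset.sum_sdiff (Finset.subset_univ J)).symm
        have hcancel : ∑ v ∈ J, ∑ u ∈ J, (g v u : ℤ) = ∑ v ∈ J, ∑ u ∈ J, (g u v : ℤ) :=
          Finset.sum_comm
        have hzero : ∑ v ∈ J, ∑ u ∈ Finset.univ \ J, (g v u : ℤ) = 0 :=
          Finset.sum_eq_zero fun v hv => Finset.sum_eq_zero fun u hu => by
            rw [hcross v hv u (Finset.mem_sdiff.mp hu).2]; rfl
        have hnonneg : 0 ≤ ∑ v ∈ J, ∑ u ∈ Finset.univ \ J, (g u v : ℤ) :=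
          Finset.sum_nonneg fun v _ => Finset.sum_nonneg fun u _ => Int.ofNat_nonneg _
        have e2 : ∑ v ∈ J, ((∑ u, (g v u : ℤ)) - ∑ u, (g u v : ℤ)) ≤ 0 := by
          rw [Finset.sum_sub_distrib, t1, t2, hcancel, hzero]
          linarith
        have hAJ : 1 ≤ (A ∩ J).card :=
          Finset.card_pos.mpr ⟨a, Finset.mem_inter.mpr ⟨ha, haJ⟩⟩
        rw [e1] at e2
        omega
      obtain ⟨b, hbB, hreach⟩ := hsink
      obtain ⟨l, hcl, hlast, hnd⟩ := exists_nodup_chain_of_reflTransGen hreach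
      have hab : a ≠ b := fun h =>
        (Finset.disjoint_left.mp hdisjT (hAT ha)) (h ▸ hBT hbB)
      have hlne : l ≠ [] := by
        rintro rfl
        simp only [List.getLast?_singleton, Option.some.injEq] at hlast
        exact hab hlast
      have hpl : ∀ q ∈ pairList (a :: l), 1 ≤ g q.1 q.2 := chain_pairList l a hcl
      -- membership facts
      have hbgl : b = (a :: l).getLast (List.cons_ne_nil a l) := by
        have := List.getLast?_eq_getLast (List.cons_ne_nil a l)
        rw [this] at hlast
        exact (Option.some.injEq _ _ ▸ hlast.symm : _)
      have hdlapp : (a :: l).dropLast ++ [b] = a :: l := by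
        rw [hbgl]; exact List.dropLast_append_getLast _
      have haD : a ∈ (a :: l).dropLast := by
        obtain ⟨x, l', rfl⟩ := List.exists_cons_of_ne_nil hlne
        simp
      have haT : a ∉ (a :: l).tail := by
        simp only [List.tail_cons]
        exact (List.nodup_cons.mp hnd).1
      have hbT : b ∈ (a :: l).tail := by
        simp only [List.tail_cons]
        rw [hbgl, List.getLast_cons hlne]
        exact List.getLast_mem hlne
      have hbD : b ∉ (a :: l).dropLast := by
        intro hmem
        have := hnd
        rw [← hdlapp] at this
        rw [List.nodup_append] at this
        exact this.2.2 b hmem b (by simp) rfl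
      have hmemiff : ∀ v, v ≠ a → v ≠ b →
          ((v ∈ (a :: l).dropLast) ↔ (v ∈ (a :: l).tail)) := by
        intro v hva hvb
        constructor
        · intro h
          have : v ∈ a :: l := List.dropLast_subset _ h
          rcases List.mem_cons.mp this with h' | h'
          · exact absurd h' hva
          · simpa using h'
        · intro h
          have : v ∈ a :: l := List.tail_subset _ h
          rw [← hdlapp] at this
          rcases List.mem_append.mp this with h' | h'
          · exact h'
          · simp at h'
            exact absurd h' hvb
      -- the walk
      obtain ⟨w, hws, hwe⟩ := walk_of_chain G r (fun u v h => (hsupp u v h).1) l a b hcl hlast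
      -- the decremented flow
      set g' : V → V → ℕ :=
        fun u v => g u v - (if (u, v) ∈ pairList (a :: l) then 1 else 0) with hg'def
      have hg'le : ∀ u v, g' u v ≤ g u v := fun u v => Nat.sub_le _ _
      have hg'cast : ∀ u v, ((g' u v : ℤ))
          = (g u v : ℤ) - (if (u, v) ∈ pairList (a :: l) then 1 else 0) := by
        intro u v
        show ((g u v - (if (u, v) ∈ pairList (a :: l) then 1 else 0) : ℕ) : ℤ)
          = (g u v : ℤ) - (if (u, v) ∈ pairList (a :: l) then 1 else 0)
        by_cases h : (u, v) ∈ pairList (a :: l)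
        · have h1 : 1 ≤ g u v := hpl (u, v) h
          rw [if_pos h, if_pos h]
          omega
        · rw [if_neg h, if_neg h]
          omega
      have hnf' : IsNFlow G X g' (A.erase a) (B.erase b) := by
        refine ⟨fun u v => le_trans (hg'le u v) (hcap u v), ?_, ?_⟩
        · intro u v h
          have h1 : 1 ≤ g u v := le_trans h (hg'le u v)
          obtain ⟨hadj, huX, hvX, hzero⟩ := hsupp u v h1
          exact ⟨hadj, huX, hvX, by have := hg'le v u; omega⟩
        · intro v
          have hsum1 : ∑ u, ((g' v u : ℤ)) = (∑ u, (g v u : ℤ))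
              - ∑ u, (if (v, u) ∈ pairList (a :: l) then (1:ℤ) else 0) := by
            rw [← Finset.sum_sub_distrib]
            exact Finset.sum_congr rfl fun u _ => hg'cast v u
          have hsum2 : ∑ u, ((g' u v : ℤ)) = (∑ u, (g u v : ℤ))
              - ∑ u, (if (u, v) ∈ pairList (a :: l) then (1:ℤ) else 0) := by
            rw [← Finset.sum_sub_distrib]
            exact Finset.sum_congr rfl fun u _ => hg'cast u v
          rw [hsum1, hsum2, pairList_sum_fst hnd, pairList_sum_snd hnd]
          have hc := hcons v
          have haB : a ∉ B := fun h => (Finset.disjoint_left.mp hdisjT (hAT ha)) (hBT h)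
          have hbA : b ∉ A := fun h => (Finset.disjoint_left.mp hdisjT (hAT h)) (hBT hbB)
          simp only [exA] at hc ⊢
          by_cases hva : v = a
          · subst hva
            have hAe : v ∉ A.erase v := by simp
            have hBe : v ∉ B.erase b := fun h => haB (Finset.mem_erase.mp h).2
            rw [if_pos haD, if_neg haT, if_neg hAe, if_neg hBe]
            rw [if_pos ha, if_neg haB] at hc
            linarith
          · by_cases hvb : v = b
            · subst hvb
              have hAe : v ∉ A.erase a := fun h => hbA (Finset.mem_erase.mp h).2
              have hBe : v ∉ B.erase v := by simp
              rw [if_neg hbD, if_pos hbT, if_neg hAe, if_neg hBe]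
              rw [if_neg hbA, if_pos hbB] at hc
              linarith
            · have hd := hmemiff v hva hvb
              have h1 : (v ∈ A.erase a) ↔ (v ∈ A) := by
                rw [Finset.mem_erase]; exact ⟨fun h => h.2, fun h => ⟨hva, h⟩⟩
              have h2 : (v ∈ B.erase b) ↔ (v ∈ B) := by
                rw [Finset.mem_erase]; exact ⟨fun h => h.2, fun h => ⟨hvb, h⟩⟩
              rw [if_congr hd rfl rfl, if_congr h1 rfl rfl, if_congr h2 rfl rfl]
              linarith
      have hcerase : (A.erase a).card ≤ n := by
        have := Finset.card_erase_of_mem ha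
        omega
      have hcards : (A.erase a).card = (B.erase b).card := by
        rw [Finset.card_erase_of_mem ha, Finset.card_erase_of_mem hbB, hcard]
      obtain ⟨P', hP1, hP2, hP3, hP4, hP5, hP6⟩ :=
        ih (A.erase a) (B.erase b) g' hcerase hnf'
          ((Finset.erase_subset _ _).trans hAT) ((Finset.erase_subset _ _).trans hBT) hcards
      set p₀ : (Σ u v : V, G.Walk u v) := ⟨a, b, w⟩ with hp₀def
      have hp₀P' : p₀ ∉ P' := fun h => by
        have := (hP1 p₀ h).1
        rw [Finset.mem_erase] at this
        exact this.1 rfl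
      refine ⟨insert p₀ P', ?_, ?_, ?_, ?_, ?_, ?_⟩
      · intro p hp
        rcases Finset.mem_insert.mp hp with rfl | hp
        · exact ⟨ha, hbB⟩
        · exact ⟨Finset.erase_subset _ _ (hP1 p hp).1, Finset.erase_subset _ _ (hP1 p hp).2⟩
      · intro p hp x hx
        rcases Finset.mem_insert.mp hp with rfl | hp
        · -- x ∈ w.support = a :: l
          rw [hws] at hx
          have : x ∈ (a :: l).dropLast ∨ x ∈ (a :: l).tail := by
            rcases List.mem_cons.mp hx with rfl | hx'
            · exact Or.inl haD
            · exact Or.inr (by simpa using hx')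
          rcases this with hmem | hmem
          · have : x ∈ ((pairList (a::l)).map Prod.fst) := by
              rw [show (pairList (a::l)).map Prod.fst = (a::l).dropLast from
                List.map_fst_zip (le_of_eq (dropLast_length_eq _))]
              exact hmem
            obtain ⟨q, hq, hqx⟩ := List.mem_map.mp this
            have := hsupp q.1 q.2 (hpl q hq)
            rw [← hqx]
            exact this.2.1
          · have : x ∈ ((pairList (a::l)).map Prod.snd) := by
              rw [show (pairList (a::l)).map Prod.snd = (a::l).tail from
                List.map_snd_zip (ge_of_eq (dropLast_length_eq _))]
              exact hmem
            obtain ⟨q, hq, hqx⟩ := List.mem_map.mp this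
            have := hsupp q.1 q.2 (hpl q hq)
            rw [← hqx]
            exact this.2.2.1
        · exact hP2 p hp x hx
      · intro a' ha'
        rw [Finset.filter_insert]
        by_cases h : a' = a
        · subst h
          rw [if_pos rfl]
          have hempty : P'.filter (fun p => p.1 = a') = ∅ := by
            rw [Finset.filter_eq_empty_iff]
            intro p hp hpa
            exact (Finset.mem_erase.mp (hP1 p hp).1).1 (hpa ▸ rfl)
          rw [hempty]
          simp
        · rw [if_neg (fun hh => h (by exact hh.symm ▸ rfl))]
          exact hP3 a' (Finset.mem_erase.mpr ⟨h, ha'⟩)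
      · intro b' hb'
        rw [Finset.filter_insert]
        by_cases h : b' = b
        · subst h
          rw [if_pos rfl]
          have hempty : P'.filter (fun p => p.2.1 = b') = ∅ := by
            rw [Finset.filter_eq_empty_iff]
            intro p hp hpb
            exact (Finset.mem_erase.mp (hP1 p hp).2).1 (hpb ▸ rfl)
          rw [hempty]
          simp
        · rw [if_neg (fun hh => h (by exact hh.symm ▸ rfl))]
          exact hP4 b' (Finset.mem_erase.mpr ⟨h, hb'⟩)
      · intro e
        rw [Finset.filter_insert]
        by_cases he : e ∈ w.edges
        · rw [if_pos he]
          have hempty : P'.filter (fun p => e ∈ p.2.2.edges) = ∅ := by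
            rw [Finset.filter_eq_empty_iff]
            intro p hp hpe
            obtain ⟨q, hq, hqe⟩ := hwe e he
            have hor := hP6 p hp q.1 q.2 (by rw [← hqe]; exact hpe)
            have h1 : g q.1 q.2 = 1 := le_antisymm (hcap _ _) (hpl q hq)
            have h2 : g q.2 q.1 = 0 := (hsupp q.1 q.2 (hpl q hq)).2.2.2
            have hq' : ((q.1, q.2) : V × V) ∈ pairList (a :: l) := by rwa [Prod.mk.eta]
            have h3 : g' q.1 q.2 = 0 := by
              show g q.1 q.2 - (if (q.1, q.2) ∈ pairList (a :: l) then 1 else 0) = 0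
              rw [if_pos hq']
              omega
            have h4 : g' q.2 q.1 = 0 := by
              have := hg'le q.2 q.1
              omega
            omega
          rw [hempty]
          simp
        · rw [if_neg he]
          exact hP5 e
      · intro p hp u v huv
        rcases Finset.mem_insert.mp hp with rfl | hp
        · obtain ⟨q, hq, hqe⟩ := hwe _ huv
          have h1 := hpl q hq
          have hqe' : s(u, v) = s(q.1, q.2) := by rw [hqe]
          rcases Sym2.eq_iff.mp hqe' with ⟨h2, h3⟩ | ⟨h2, h3⟩
          · left; rw [h2, h3]; exact h1
          · right; rw [h3, h2]; exact h1
        · rcases hP6 p hp u v huv with h | h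
          · exact Or.inl (le_trans h (hg'le u v))
          · exact Or.inr (le_trans h (hg'le v u))

lemma exists_unitflow [Fintype V] {G : SimpleGraph V} {X Z T1 T2 : Finset V}
    (hZX : Z ⊆ X) (hT1 : T1 ⊆ Z) (hT2 : T2 ⊆ Z) (hdisj : Disjoint T1 T2)
    (hTcard : T1.card = T2.card)
    (CC : ∀ J ⊆ X, min ((Z ∩ J).card) ((Z ∩ (X \ J)).card) ≤ cutCard G J (X \ J)) :
    HasUnitFlowIn G X T1 T2 1 := by
  obtain ⟨f, hf⟩ := maxflow hZX hT1 hT2 hdisj hTcard CC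
  have hnf := flow_to_nflow hf
  obtain ⟨P, h1, h2, h3, h4, h5, h6⟩ :=
    decomp hdisj T1.card T1 T2 _ le_rfl hnf le_rfl le_rfl hTcard
  refine ⟨P, fun _ => (1:ℝ), fun p _ => zero_le_one, h1, h2, ?_, ?_, ?_⟩
  · intro a haT
    rw [Finset.sum_const, h3 a haT]
    simp
  · intro b hbT
    rw [Finset.sum_const, h4 b hbT]
    simp
  · intro e
    rw [Finset.sum_const, nsmul_eq_mul, mul_one]
    exact_mod_cast h5 e

lemma cutCard_comm (G : SimpleGraph V) (A B : Finset V) : cutCard G A B = cutCard G B A := by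
  unfold cutCard
  apply Finset.card_bij' (fun p _ => Prod.swap p) (fun p _ => Prod.swap p)
  · intro p hp
    rw [Finset.mem_filter, Finset.mem_product] at hp ⊢
    exact ⟨⟨hp.1.2, hp.1.1⟩, hp.2.symm⟩
  · intro p hp
    rw [Finset.mem_filter, Finset.mem_product] at hp ⊢
    exact ⟨⟨hp.1.2, hp.1.1⟩, hp.2.symm⟩
  · intro p _; exact Prod.swap_swap p
  · intro p _; exact Prod.swap_swap p

lemma cutCard_union_left (G : SimpleGraph V) {A₁ A₂ : Finset V} (B : Finset V)
    (h : Disjoint A₁ A₂) :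
    cutCard G (A₁ ∪ A₂) B = cutCard G A₁ B + cutCard G A₂ B := by
  unfold cutCard
  rw [Finset.union_product, Finset.filter_union]
  apply Finset.card_union_of_disjoint
  rw [Finset.disjoint_left]
  intro p hp hp'
  rw [Finset.mem_filter, Finset.mem_product] at hp hp'
  exact (Finset.disjoint_left.mp h hp.1.1) hp'.1.1

lemma cutCard_union_right (G : SimpleGraph V) (A : Finset V) {B₁ B₂ : Finset V}
    (h : Disjoint B₁ B₂) :
    cutCard G A (B₁ ∪ B₂) = cutCard G A B₁ + cutCard G A B₂ := by
  rw [cutCard_comm, cutCard_union_left G A h, cutCard_comm G B₁, cutCard_comm G B₂]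

lemma card_Z_inter_le_cutCard (G : SimpleGraph V) (X Y J : Finset V) :
    (((X.filter (fun v => ∃ u ∈ Y, G.Adj v u)) ∩ J).card) ≤ cutCard G J Y := by
  classical
  apply Finset.card_le_card_of_injOn
    (fun z => (z, if h : ∃ u, u ∈ Y ∧ G.Adj z u then h.choose else z))
  · intro z hz
    obtain ⟨hzZ, hzJ⟩ := Finset.mem_inter.mp hz
    obtain ⟨-, hex⟩ := Finset.mem_filter.mp hzZ
    have hex' : ∃ u, u ∈ Y ∧ G.Adj z u := by
      obtain ⟨u, hu, hadj⟩ := hex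
      exact ⟨u, hu, hadj⟩
    rw [Finset.mem_coe, Finset.mem_filter, Finset.mem_product]
    simp only [hex', dif_pos]
    exact ⟨⟨hzJ, hex'.choose_spec.1⟩, hex'.choose_spec.2⟩
  · intro z _ z' _ hzz
    exact congrArg Prod.fst hzz

lemma cut_condition (G : SimpleGraph V) (S X Y : Finset V)
    (hbal : IsBalancedCut (bdry G S) X Y S (1/4))
    (hmincut : ∀ X' Y' : Finset V, IsBalancedCut (bdry G S) X' Y' S (1/4) →
      cutCard G X Y ≤ cutCard G X' Y')
    (hXY : (Y ∩ bdry G S).card ≤ (X ∩ bdry G S).card) :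
    ∀ J ⊆ X, min (((X.filter (fun v => ∃ u ∈ Y, G.Adj v u)) ∩ J).card)
      (((X.filter (fun v => ∃ u ∈ Y, G.Adj v u)) ∩ (X \ J)).card) ≤ cutCard G J (X \ J) := by
  intro J hJX
  by_contra hcon
  push_neg at hcon
  set Z := X.filter (fun v => ∃ u ∈ Y, G.Adj v u) with hZdef
  set J' := X \ J with hJ'def
  set Bd := bdry G S with hBddef
  obtain ⟨hXYS, hdisjXY, hXb, hYb⟩ := hbal
  have hJJ' : J ∪ J' = X := Finset.union_sdiff_of_subset hJX
  have hdisjJJ' : Disjoint J J' := Finset.disjoint_sdiff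
  have hJ'X : J' ⊆ X := Finset.sdiff_subset
  have hBdS : Bd ⊆ S := Finset.filter_subset _ _
  have hsplitB : (X ∩ Bd).card = (J ∩ Bd).card + (J' ∩ Bd).card := by
    rw [← hJJ', Finset.union_inter_distrib_right]
    apply Finset.card_union_of_disjoint
    exact Finset.disjoint_of_subset_left Finset.inter_subset_left
      (Finset.disjoint_of_subset_right Finset.inter_subset_left hdisjJJ')
  have hwsum : (X ∩ Bd).card + (Y ∩ Bd).card = Bd.card := by
    have hu : (X ∩ Bd) ∪ (Y ∩ Bd) = Bd := by
      rw [← Finset.union_inter_distrib_right, hXYS]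
      exact Finset.inter_eq_right.mpr hBdS
    have hd : Disjoint (X ∩ Bd) (Y ∩ Bd) :=
      Finset.disjoint_of_subset_left Finset.inter_subset_left
        (Finset.disjoint_of_subset_right Finset.inter_subset_left hdisjXY)
    have hcu := Finset.card_union_of_disjoint hd
    rw [hu] at hcu
    omega
  have hdisjJY : Disjoint J Y := Finset.disjoint_of_subset_left hJX hdisjXY
  have hdisjJ'Y : Disjoint J' Y := Finset.disjoint_of_subset_left hJ'X hdisjXY
  have hXcut : cutCard G X Y = cutCard G J Y + cutCard G J' Y := by
    rw [← hJJ', cutCard_union_left G Y hdisjJJ']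
  have hZJ : (Z ∩ J).card ≤ cutCard G J Y := card_Z_inter_le_cutCard G X Y J
  have hZJ' : (Z ∩ J').card ≤ cutCard G J' Y := card_Z_inter_le_cutCard G X Y J'
  by_cases hside : (J ∩ Bd).card ≤ (J' ∩ Bd).card
  · -- move J to the Y side
    have hbal' : IsBalancedCut Bd J' (Y ∪ J) S (1/4) := by
      refine ⟨?_, ?_, ?_, ?_⟩
      · rw [Finset.union_comm Y J, ← Finset.union_assoc, Finset.union_comm J' J, hJJ', hXYS]
      · rw [Finset.disjoint_union_right]
        exact ⟨hdisjJ'Y, hdisjJJ'.symm⟩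
      · have hws' : ((X ∩ Bd).card : ℝ) + ((Y ∩ Bd).card : ℝ) = (Bd.card : ℝ) := by
          exact_mod_cast hwsum
        have hc : ((Y ∩ Bd).card : ℝ) ≤ ((X ∩ Bd).card : ℝ) := by exact_mod_cast hXY
        have hsp' : ((X ∩ Bd).card : ℝ) = ((J ∩ Bd).card : ℝ) + ((J' ∩ Bd).card : ℝ) := by
          exact_mod_cast hsplitB
        have hs : ((J ∩ Bd).card : ℝ) ≤ ((J' ∩ Bd).card : ℝ) := by exact_mod_cast hside
        linarith
      · have h1 : ((Y ∩ Bd).card : ℝ) ≤ (((Y ∪ J) ∩ Bd).card : ℝ) := by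
          have : (Y ∩ Bd) ⊆ ((Y ∪ J) ∩ Bd) :=
            Finset.inter_subset_inter Finset.subset_union_left le_rfl
          exact_mod_cast Finset.card_le_card this
        linarith
    have hmc := hmincut J' (Y ∪ J) hbal'
    have hsplit2 : cutCard G J' (Y ∪ J) = cutCard G J' Y + cutCard G J' J := by
      apply cutCard_union_right
      exact hdisjJY.symm
    have hcomm : cutCard G J' J = cutCard G J J' := cutCard_comm G J' J
    have hlt : cutCard G J J' < (Z ∩ J).card := lt_of_lt_of_le hcon (min_le_left _ _)
    omega
  · -- move J' to the Y side
    have hbal' : IsBalancedCut Bd J (Y ∪ J') S (1/4) := by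
      refine ⟨?_, ?_, ?_, ?_⟩
      · rw [Finset.union_comm Y J', ← Finset.union_assoc, hJJ', hXYS]
      · rw [Finset.disjoint_union_right]
        exact ⟨hdisjJY, hdisjJJ'⟩
      · have hws' : ((X ∩ Bd).card : ℝ) + ((Y ∩ Bd).card : ℝ) = (Bd.card : ℝ) := by
          exact_mod_cast hwsum
        have hc : ((Y ∩ Bd).card : ℝ) ≤ ((X ∩ Bd).card : ℝ) := by exact_mod_cast hXY
        have hsp' : ((X ∩ Bd).card : ℝ) = ((J ∩ Bd).card : ℝ) + ((J' ∩ Bd).card : ℝ) := by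
          exact_mod_cast hsplitB
        have hs : ((J' ∩ Bd).card : ℝ) ≤ ((J ∩ Bd).card : ℝ) := by
          have hh : (J' ∩ Bd).card ≤ (J ∩ Bd).card := by omega
          exact_mod_cast hh
        linarith
      · have h1 : ((Y ∩ Bd).card : ℝ) ≤ (((Y ∪ J') ∩ Bd).card : ℝ) := by
          have : (Y ∩ Bd) ⊆ ((Y ∪ J') ∩ Bd) :=
            Finset.inter_subset_inter Finset.subset_union_left le_rfl
          exact_mod_cast Finset.card_le_card this
        linarith
    have hmc := hmincut J (Y ∪ J') hbal'
    have hsplit2 : cutCard G J (Y ∪ J') = cutCard G J Y + cutCard G J J' := by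
      apply cutCard_union_right
      exact hdisjJ'Y.symm
    have hlt : cutCard G J J' < (Z ∩ J').card := lt_of_lt_of_le hcon (min_le_right _ _)
    omega


/-- Let `S` be a cluster whose boundary `B := Γ(S)` (of size `w`) is
`α`-well-linked in `G[S]`, let `(X,Y)` be a minimum `1/4`-balanced cut of `G[S]` with
respect to `B` with `|X ∩ B| ≥ |Y ∩ B|`, and let `Z ⊆ X` be the set of vertices of `X`
incident on the edges of `E(X,Y)`.  Then `Z` is `1`-well-linked in `G[X]`. -/
theorem stmt17 [Fintype V] (G : SimpleGraph V) (S : Finset V) (w : ℕ)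
    (hw : (bdry G S).card = w)
    (α : ℝ) (hα0 : 0 < α) (hα1 : α ≤ 1)
    (hwl : WellLinkedIn G S (bdry G S) α)
    (X Y : Finset V)
    (hbal : IsBalancedCut (bdry G S) X Y S (1 / 4))
    (hmincut : ∀ X' Y' : Finset V, IsBalancedCut (bdry G S) X' Y' S (1 / 4) →
      cutCard G X Y ≤ cutCard G X' Y')
    (hXY : (Y ∩ bdry G S).card ≤ (X ∩ bdry G S).card) :
    WellLinkedIn G X (X.filter (fun v => ∃ u ∈ Y, G.Adj v u)) 1 := by
  intro T' T'' hT' hT'' hdisj hcard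
  have hZX : (X.filter (fun v => ∃ u ∈ Y, G.Adj v u)) ⊆ X := Finset.filter_subset _ _
  have CC := cut_condition G S X Y hbal hmincut hXY
  have hflow := exists_unitflow hZX hT' hT'' hdisj hcard CC
  rwa [show (1:ℝ)/1 = 1 from by norm_num]
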